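/- For permutations u of {1,…,k} and v of {1,…,m}, the number of balanced Rothe tableaux of the direct sum satisfies |BRT(u ⊕ v)| = C(ℓ(u)+ℓ(v), ℓ(u)) · |BRT(u)| · |BRT(v)|, where C denotes the binomial coefficient. -/

import Mathlib

/-- The Rothe diagram of a permutation of `{0, …, n-1}` (0-based indexing):
cell `(i,j)` belongs to the diagram iff `j < w i` and `i < w⁻¹ j`. -/
def rothe {n : ℕ} (w : Equiv.Perm (Fin n)) : Finset (Fin n × Fin n) :=
  Finset.univ.filter fun c => c.2 < w c.1 ∧ c.1 < w⁻¹ c.2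

/-- `ℓ(w)`: the number of inversions of `w`. -/
def plen {n : ℕ} (w : Equiv.Perm (Fin n)) : ℕ :=
  (Finset.univ.filter fun p : Fin n × Fin n => p.1 < p.2 ∧ w p.2 < w p.1).card

/-- A standard Rothe tableau of `w`: a labelling of the cells of the Rothe diagram by
`1, …, ℓ(w)` (bijectively), strictly increasing along rows and columns; the labelling
is recorded as a function on all of `Fin n × Fin n` that vanishes off the diagram. -/
def IsSRT {n : ℕ} (w : Equiv.Perm (Fin n)) (T : Fin n × Fin n → ℕ) : Prop :=
  Set.BijOn T ↑(rothe w) (Set.Icc 1 (plen w)) ∧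
  (∀ c, c ∉ rothe w → T c = 0) ∧
  (∀ c ∈ rothe w, ∀ c' ∈ rothe w, c.1 = c'.1 → c.2 < c'.2 → T c < T c') ∧
  (∀ c ∈ rothe w, ∀ c' ∈ rothe w, c.2 = c'.2 → c.1 < c'.1 → T c < T c')

noncomputable def srtCard {n : ℕ} (w : Equiv.Perm (Fin n)) : ℕ :=
  Nat.card {T : Fin n × Fin n → ℕ // IsSRT w T}

/-- The hook of a cell of the Rothe diagram. -/
def hook {n : ℕ} (w : Equiv.Perm (Fin n)) (c : Fin n × Fin n) : Finset (Fin n × Fin n) :=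
  (rothe w).filter fun d => (d.1 = c.1 ∧ c.2 ≤ d.2) ∨ (d.2 = c.2 ∧ c.1 ≤ d.1)

/-- A balanced Rothe tableau of `w`. -/
def IsBRT {n : ℕ} (w : Equiv.Perm (Fin n)) (T : Fin n × Fin n → ℕ) : Prop :=
  Set.BijOn T ↑(rothe w) (Set.Icc 1 (plen w)) ∧
  (∀ c, c ∉ rothe w → T c = 0) ∧
  ∀ c ∈ rothe w,
    ((hook w c).filter fun d => T d < T c).card
      = ((rothe w).filter fun d => d.1 = c.1 ∧ c.2 < d.2).card

noncomputable def brtCard {n : ℕ} (w : Equiv.Perm (Fin n)) : ℕ :=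
  Nat.card {T : Fin n × Fin n → ℕ // IsBRT w T}

/-- `w` contains the pattern `p`. -/
def ContainsPattern {n k : ℕ} (w : Equiv.Perm (Fin n)) (p : Equiv.Perm (Fin k)) : Prop :=
  ∃ f : Fin k → Fin n, StrictMono f ∧ ∀ s t : Fin k, w (f s) < w (f t) ↔ p s < p t

/-- The pattern 2413 (0-based one-line notation `1 3 0 2`). -/
def p2413 : Equiv.Perm (Fin 4) :=
  ⟨![1,3,0,2], ![2,0,3,1], by intro x; fin_cases x <;> rfl, by intro x; fin_cases x <;> rfl⟩

def p2431 : Equiv.Perm (Fin 4) :=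
  ⟨![1,3,2,0], ![3,0,2,1], by intro x; fin_cases x <;> rfl, by intro x; fin_cases x <;> rfl⟩

def p3142 : Equiv.Perm (Fin 4) :=
  ⟨![2,0,3,1], ![1,3,0,2], by intro x; fin_cases x <;> rfl, by intro x; fin_cases x <;> rfl⟩

def p4132 : Equiv.Perm (Fin 4) :=
  ⟨![3,0,2,1], ![1,3,2,0], by intro x; fin_cases x <;> rfl, by intro x; fin_cases x <;> rfl⟩

def p4213 : Equiv.Perm (Fin 4) :=
  ⟨![3,1,0,2], ![2,1,3,0], by intro x; fin_cases x <;> rfl, by intro x; fin_cases x <;> rfl⟩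

def p3241 : Equiv.Perm (Fin 4) :=
  ⟨![2,1,3,0], ![3,1,0,2], by intro x; fin_cases x <;> rfl, by intro x; fin_cases x <;> rfl⟩

def p132 : Equiv.Perm (Fin 3) :=
  ⟨![0,2,1], ![0,2,1], by intro x; fin_cases x <;> rfl, by intro x; fin_cases x <;> rfl⟩

/-- The adjacent transposition `s_a` (0-based: swaps `a` and `a+1`), as a permutation
of `Fin n`; it is the identity when `a+1 ≥ n`. -/
def adjT (n a : ℕ) : Equiv.Perm (Fin n) :=
  if h : a + 1 < n then Equiv.swap ⟨a, Nat.lt_of_succ_lt h⟩ ⟨a + 1, h⟩ else 1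

/-- Reduced words of `w`, written with 0-based letters `a` (`0 ≤ a ≤ n-2`). -/
def IsReducedWord {n : ℕ} (w : Equiv.Perm (Fin n)) (L : List ℕ) : Prop :=
  (∀ a ∈ L, a + 1 < n) ∧ (L.map (adjT n)).prod = w ∧ L.length = plen w

noncomputable def rwCard {n : ℕ} (w : Equiv.Perm (Fin n)) : ℕ :=
  Nat.card {L : List ℕ // IsReducedWord w L}

/-- Direct sum of two permutations. -/
def dsum {k m : ℕ} (u : Equiv.Perm (Fin k)) (v : Equiv.Perm (Fin m)) :
    Equiv.Perm (Fin (k + m)) :=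
  finSumFinEquiv.permCongr (Equiv.sumCongr u v)

def dsumSig (p q : Σ m : ℕ, Equiv.Perm (Fin m)) : Σ m : ℕ, Equiv.Perm (Fin m) :=
  ⟨p.1 + q.1, dsum p.2 q.2⟩

/-- The direct sum `w¹ ⊕ w² ⊕ ⋯ ⊕ wᵏ` of a list of permutations. -/
def dsumList (l : List (Σ m : ℕ, Equiv.Perm (Fin m))) : Σ m : ℕ, Equiv.Perm (Fin m) :=
  l.foldr dsumSig ⟨0, 1⟩

/-- `w` is decomposable if it maps `{0,…,k-1}` onto itself for some `0 < k < n`. -/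
def Decomposable {n : ℕ} (w : Equiv.Perm (Fin n)) : Prop :=
  ∃ k : ℕ, 0 < k ∧ k < n ∧ ∀ i : Fin n, (i : ℕ) < k → ((w i : ℕ)) < k

/-- The Lehmer code of `w`. -/
def lehmer {n : ℕ} (w : Equiv.Perm (Fin n)) (i : Fin n) : ℕ :=
  (Finset.univ.filter fun j : Fin n => i < j ∧ w j < w i).card

/-- The cells of the Young diagram of `lam`. -/
def yCells {m : ℕ} (lam : Fin m → ℕ) : Set (Fin m × ℕ) :=
  {c | c.2 < lam c.1}

/-- A standard Young tableau of shape `lam`. -/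
def IsSYT {m : ℕ} (lam : Fin m → ℕ) (T : Fin m × ℕ → ℕ) : Prop :=
  Set.BijOn T (yCells lam) (Set.Icc 1 (∑ i, lam i)) ∧
  (∀ c, c ∉ yCells lam → T c = 0) ∧
  (∀ c ∈ yCells lam, ∀ c' ∈ yCells lam, c.1 = c'.1 → c.2 < c'.2 → T c < T c') ∧
  (∀ c ∈ yCells lam, ∀ c' ∈ yCells lam, c.2 = c'.2 → c.1 < c'.1 → T c < T c')

/-- `f^λ`: the number of standard Young tableaux of shape `lam`. -/
noncomputable def sytCard {m : ℕ} (lam : Fin m → ℕ) : ℕ :=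
  Nat.card {T : Fin m × ℕ → ℕ // IsSYT lam T}

namespace BRTaux
open Finset

variable {k m : ℕ} (u : Equiv.Perm (Fin k)) (v : Equiv.Perm (Fin m))

def eL : (Fin k × Fin k) ↪ (Fin (k+m) × Fin (k+m)) :=
  ⟨fun c => (c.1.castAdd m, c.2.castAdd m), show Function.Injective _ by
    intro a b h
    simp only [Prod.mk.injEq, Fin.ext_iff, Fin.coe_castAdd] at h
    exact Prod.ext (Fin.ext h.1) (Fin.ext h.2)⟩

def eR : (Fin m × Fin m) ↪ (Fin (k+m) × Fin (k+m)) :=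
  ⟨fun c => (c.1.natAdd k, c.2.natAdd k), show Function.Injective _ by
    intro a b h
    simp only [Prod.mk.injEq, Fin.ext_iff, Fin.coe_natAdd] at h
    exact Prod.ext (Fin.ext (by omega)) (Fin.ext (by omega))⟩

lemma dsum_castAdd (i : Fin k) : dsum u v (Fin.castAdd m i) = Fin.castAdd m (u i) := by
  simp [dsum, ← finSumFinEquiv_apply_left]

lemma dsum_natAdd (i : Fin m) : dsum u v (Fin.natAdd k i) = Fin.natAdd k (v i) := by
  simp [dsum, ← finSumFinEquiv_apply_right]

lemma dsum_inv : (dsum u v)⁻¹ = dsum u⁻¹ v⁻¹ := by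
  apply inv_eq_of_mul_eq_one_right
  ext x
  refine Fin.addCases (fun i => ?_) (fun i => ?_) x <;>
    simp [Equiv.Perm.mul_apply, dsum_castAdd, dsum_natAdd]

lemma mem_rothe_L (c : Fin k × Fin k) :
    eL (k:=k) (m:=m) c ∈ rothe (dsum u v) ↔ c ∈ rothe u := by
  simp only [rothe, mem_filter, mem_univ, true_and, eL, Function.Embedding.coeFn_mk,
    dsum_inv, dsum_castAdd, Fin.lt_def, Fin.coe_castAdd]

lemma mem_rothe_R (c : Fin m × Fin m) :
    eR (k:=k) (m:=m) c ∈ rothe (dsum u v) ↔ c ∈ rothe v := by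
  simp only [rothe, mem_filter, mem_univ, true_and, eR, Function.Embedding.coeFn_mk,
    dsum_inv, dsum_natAdd, Fin.lt_def, Fin.coe_natAdd, Nat.add_lt_add_iff_left]

lemma mem_rothe_LR (i : Fin k) (j : Fin m) :
    (Fin.castAdd m i, Fin.natAdd k j) ∉ rothe (dsum u v) := by
  simp only [rothe, mem_filter, mem_univ, true_and, not_and]
  intro h
  exfalso
  rw [show (Fin.castAdd m i : Fin (k+m)) = i.castAdd m from rfl, dsum_castAdd,
    Fin.lt_def] at h
  simp only [Fin.coe_natAdd, Fin.coe_castAdd] at h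
  have := (u i).isLt
  omega

lemma mem_rothe_RL (i : Fin m) (j : Fin k) :
    (Fin.natAdd k i, Fin.castAdd m j) ∉ rothe (dsum u v) := by
  simp only [rothe, mem_filter, mem_univ, true_and, not_and]
  intro _ h
  rw [dsum_inv, show (Fin.castAdd m j : Fin (k+m)) = j.castAdd m from rfl, dsum_castAdd,
    Fin.lt_def] at h
  simp only [Fin.coe_natAdd, Fin.coe_castAdd] at h
  have := (u⁻¹ j).isLt
  omega

lemma notmem_map_eR_L (i : Fin k) (y : Fin (k+m)) (s : Finset (Fin m × Fin m)) :
    (Fin.castAdd m i, y) ∉ s.map (eR (k:=k) (m:=m)) := by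
  intro h
  obtain ⟨a, -, ha⟩ := mem_map.mp h
  have := congrArg (fun p => (Fin.val p.1)) ha
  simp only [eR, Function.Embedding.coeFn_mk, Fin.coe_natAdd, Fin.coe_castAdd] at this
  have := i.isLt
  omega

lemma notmem_map_eL_R (i : Fin m) (y : Fin (k+m)) (s : Finset (Fin k × Fin k)) :
    (Fin.natAdd k i, y) ∉ s.map (eL (k:=k) (m:=m)) := by
  intro h
  obtain ⟨a, -, ha⟩ := mem_map.mp h
  have := congrArg (fun p => (Fin.val p.1)) ha
  simp only [eL, Function.Embedding.coeFn_mk, Fin.coe_natAdd, Fin.coe_castAdd] at this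
  have := a.1.isLt
  omega

lemma rothe_dsum : rothe (dsum u v) = (rothe u).map (eL (k:=k) (m:=m)) ∪ (rothe v).map eR := by
  ext ⟨x, y⟩
  refine Fin.addCases (fun i => ?_) (fun i => ?_) x <;>
    refine Fin.addCases (fun j => ?_) (fun j => ?_) y
  · rw [show ((Fin.castAdd m i, Fin.castAdd m j) : Fin (k+m) × Fin (k+m)) = eL (i, j) from rfl,
      mem_rothe_L, mem_union, Finset.mem_map']
    exact (or_iff_left (notmem_map_eR_L i _ _)).symm
  · simp only [mem_union, notmem_map_eR_L (s := rothe v), or_false,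
      mem_rothe_LR u v i j, false_iff]
    rw [show ((Fin.castAdd m i, Fin.natAdd k j) : Fin (k+m) × Fin (k+m)) ∈ (rothe u).map eL ↔ _ from Iff.rfl]
    intro h
    obtain ⟨a, -, ha⟩ := mem_map.mp h
    have := congrArg (fun p => (Fin.val p.2)) ha
    simp only [eL, Function.Embedding.coeFn_mk, Fin.coe_castAdd, Fin.coe_natAdd] at this
    have := a.2.isLt
    omega
  · simp only [mem_union, notmem_map_eL_R (s := rothe u), false_or,
      mem_rothe_RL u v i j, false_iff]
    intro h
    obtain ⟨a, -, ha⟩ := mem_map.mp h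
    have := congrArg (fun p => (Fin.val p.2)) ha
    simp only [eR, Function.Embedding.coeFn_mk, Fin.coe_castAdd, Fin.coe_natAdd] at this
    have := j.isLt
    omega
  · rw [show ((Fin.natAdd k i, Fin.natAdd k j) : Fin (k+m) × Fin (k+m)) = eR (i, j) from rfl,
      mem_rothe_R, mem_union, Finset.mem_map']
    exact (or_iff_right (notmem_map_eL_R i _ _)).symm

lemma disjoint_maps (s : Finset (Fin k × Fin k)) (t : Finset (Fin m × Fin m)) :
    Disjoint (s.map (eL (k:=k) (m:=m))) (t.map eR) := by
  rw [Finset.disjoint_left]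
  intro a ha hb
  obtain ⟨b, -, rfl⟩ := mem_map.mp ha
  exact notmem_map_eR_L b.1 _ _ hb

lemma card_rothe {n : ℕ} (w : Equiv.Perm (Fin n)) : (rothe w).card = plen w := by
  apply Finset.card_nbij' (fun c => (c.1, w⁻¹ c.2)) (fun p => (p.1, w p.2))
  · intro c hc
    simp only [rothe, Finset.mem_coe, mem_filter, mem_univ, true_and] at hc
    simp only [Finset.mem_coe, mem_filter, mem_univ, true_and]
    exact ⟨hc.2, by simpa using hc.1⟩
  · intro p hp
    simp only [Finset.mem_coe, mem_filter, mem_univ, true_and] at hp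
    simp only [rothe, Finset.mem_coe, mem_filter, mem_univ, true_and]
    exact ⟨hp.2, by simpa using hp.1⟩
  · intro c _; simp
  · intro p _; simp

lemma plen_dsum : plen (dsum u v) = plen u + plen v := by
  rw [← card_rothe, rothe_dsum, card_union_of_disjoint (disjoint_maps _ _),
    card_map, card_map, card_rothe, card_rothe]

lemma hook_dsum_L (c : Fin k × Fin k) :
    hook (dsum u v) (eL (k:=k) (m:=m) c) = (hook u c).map eL := by
  unfold hook
  rw [rothe_dsum, filter_union, filter_map, filter_map]
  have h1 : (rothe v).filter
      ((fun d => (d.1 = (eL (k:=k) (m:=m) c).1 ∧ (eL c).2 ≤ d.2) ∨ (d.2 = (eL c).2 ∧ (eL c).1 ≤ d.1)) ∘ eR) = ∅ := by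
    rw [filter_eq_empty_iff]
    intro d _
    simp only [Function.comp_apply, eL, eR, Function.Embedding.coeFn_mk, not_or, not_and,
      Fin.ext_iff, Fin.coe_natAdd, Fin.coe_castAdd]
    constructor
    · intro h; exfalso; have := c.1.isLt; omega
    · intro h; exfalso; have := c.2.isLt; omega
  rw [h1, map_empty, union_empty]
  congr 1
  apply filter_congr
  intro d _
  simp only [Function.comp_apply, eL, Function.Embedding.coeFn_mk, Fin.ext_iff,
    Fin.coe_castAdd, Fin.le_def]

lemma hook_dsum_R (c : Fin m × Fin m) :
    hook (dsum u v) (eR (k:=k) (m:=m) c) = (hook v c).map eR := by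
  unfold hook
  rw [rothe_dsum, filter_union, filter_map, filter_map]
  have h1 : (rothe u).filter
      ((fun d => (d.1 = (eR (k:=k) (m:=m) c).1 ∧ (eR c).2 ≤ d.2) ∨ (d.2 = (eR c).2 ∧ (eR c).1 ≤ d.1)) ∘ eL) = ∅ := by
    rw [filter_eq_empty_iff]
    intro d _
    simp only [Function.comp_apply, eL, eR, Function.Embedding.coeFn_mk, not_or, not_and,
      Fin.ext_iff, Fin.coe_natAdd, Fin.coe_castAdd]
    constructor
    · intro h; exfalso; have := d.1.isLt; omega
    · intro h; exfalso; have := d.2.isLt; omega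
  rw [h1, map_empty, empty_union]
  congr 1
  apply filter_congr
  intro d _
  simp only [Function.comp_apply, eR, Function.Embedding.coeFn_mk, Fin.ext_iff,
    Fin.coe_natAdd, Fin.le_def, Nat.add_le_add_iff_left, Nat.add_left_cancel_iff]

lemma row_count_L (c : Fin k × Fin k) :
    ((rothe (dsum u v)).filter fun d => d.1 = (eL (k:=k) (m:=m) c).1 ∧ (eL c).2 < d.2).card
      = ((rothe u).filter fun d => d.1 = c.1 ∧ c.2 < d.2).card := by
  rw [rothe_dsum, filter_union, filter_map, filter_map]
  have h1 : (rothe v).filter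
      ((fun d => d.1 = (eL (k:=k) (m:=m) c).1 ∧ (eL c).2 < d.2) ∘ eR) = ∅ := by
    rw [filter_eq_empty_iff]
    intro d _
    simp only [Function.comp_apply, eL, eR, Function.Embedding.coeFn_mk, not_and,
      Fin.ext_iff, Fin.coe_natAdd, Fin.coe_castAdd]
    intro h; exfalso; have := c.1.isLt; omega
  rw [h1, map_empty, union_empty, card_map]
  congr 1
  apply filter_congr
  intro d _
  simp only [Function.comp_apply, eL, Function.Embedding.coeFn_mk, Fin.ext_iff,
    Fin.coe_castAdd, Fin.lt_def]

lemma row_count_R (c : Fin m × Fin m) :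
    ((rothe (dsum u v)).filter fun d => d.1 = (eR (k:=k) (m:=m) c).1 ∧ (eR c).2 < d.2).card
      = ((rothe v).filter fun d => d.1 = c.1 ∧ c.2 < d.2).card := by
  rw [rothe_dsum, filter_union, filter_map, filter_map]
  have h1 : (rothe u).filter
      ((fun d => d.1 = (eR (k:=k) (m:=m) c).1 ∧ (eR c).2 < d.2) ∘ eL) = ∅ := by
    rw [filter_eq_empty_iff]
    intro d _
    simp only [Function.comp_apply, eL, eR, Function.Embedding.coeFn_mk, not_and,
      Fin.ext_iff, Fin.coe_natAdd, Fin.coe_castAdd]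
    intro h; exfalso; have := d.1.isLt; omega
  rw [h1, map_empty, empty_union, card_map]
  congr 1
  apply filter_congr
  intro d _
  simp only [Function.comp_apply, eR, Function.Embedding.coeFn_mk, Fin.ext_iff,
    Fin.coe_natAdd, Fin.lt_def, Nat.add_lt_add_iff_left, Nat.add_left_cancel_iff]

noncomputable def rel (S : Finset ℕ) (x : ℕ) : ℕ :=
  if h : x - 1 < S.card ∧ x ≠ 0 then (S.orderIsoOfFin rfl ⟨x - 1, h.1⟩ : ℕ) else 0

noncomputable def unrel (S : Finset ℕ) (y : ℕ) : ℕ :=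
  if h : y ∈ S then ((S.orderIsoOfFin rfl).symm ⟨y, h⟩ : ℕ) + 1 else 0

lemma rel_zero (S : Finset ℕ) : rel S 0 = 0 := by simp [rel]

lemma unrel_zero {S : Finset ℕ} (h0 : 0 ∉ S) : unrel S 0 = 0 := by simp [unrel, h0]

lemma rel_mem {S : Finset ℕ} {x : ℕ} (hx : x ∈ Finset.Icc 1 S.card) : rel S x ∈ S := by
  rw [Finset.mem_Icc] at hx
  rw [rel, dif_pos ⟨by omega, by omega⟩]
  exact (S.orderIsoOfFin rfl ⟨x - 1, by omega⟩).2

lemma rel_lt {S : Finset ℕ} {x y : ℕ} (hx : x ∈ Finset.Icc 1 S.card)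
    (hy : y ∈ Finset.Icc 1 S.card) (hxy : x < y) : rel S x < rel S y := by
  rw [Finset.mem_Icc] at hx hy
  rw [rel, rel, dif_pos ⟨by omega, by omega⟩, dif_pos ⟨by omega, by omega⟩]
  have := (S.orderIsoOfFin rfl).strictMono (a := ⟨x - 1, by omega⟩) (b := ⟨y - 1, by omega⟩)
    (by simp [Fin.lt_def]; omega)
  exact this

lemma unrel_rel {S : Finset ℕ} {x : ℕ} (hx : x ∈ Finset.Icc 1 S.card) :
    unrel S (rel S x) = x := by
  have hm := rel_mem hx
  rw [Finset.mem_Icc] at hx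
  have hy : rel S x = (S.orderIsoOfFin rfl ⟨x - 1, by omega⟩ : ℕ) := by
    simp only [rel]
    rw [dif_pos ⟨by omega, by omega⟩]
  rw [unrel, dif_pos hm,
    show (⟨rel S x, hm⟩ : {a // a ∈ S}) = S.orderIsoOfFin rfl ⟨x - 1, by omega⟩ from
      Subtype.ext hy,
    OrderIso.symm_apply_apply]
  simp
  omega

lemma rel_unrel {S : Finset ℕ} {y : ℕ} (hy : y ∈ S) : rel S (unrel S y) = y := by
  rw [unrel, dif_pos hy, rel, dif_pos ⟨by simp, by omega⟩]
  have : (⟨((S.orderIsoOfFin rfl).symm ⟨y, hy⟩ : ℕ) + 1 - 1, by simp⟩ : Fin S.card)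
      = (S.orderIsoOfFin rfl).symm ⟨y, hy⟩ := by
    apply Fin.ext; simp
  rw [this, OrderIso.apply_symm_apply]

lemma unrel_mem {S : Finset ℕ} {y : ℕ} (hy : y ∈ S) : unrel S y ∈ Finset.Icc 1 S.card := by
  rw [unrel, dif_pos hy, Finset.mem_Icc]
  have := ((S.orderIsoOfFin rfl).symm ⟨y, hy⟩).isLt
  omega

lemma unrel_lt {S : Finset ℕ} {y z : ℕ} (hy : y ∈ S) (hz : z ∈ S) (hyz : y < z) :
    unrel S y < unrel S z := by
  simp only [unrel]
  rw [dif_pos hy, dif_pos hz]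
  have := (S.orderIsoOfFin rfl).symm.strictMono (a := ⟨y, hy⟩) (b := ⟨z, hz⟩)
    (by exact hyz)
  simpa [Fin.lt_def] using Nat.add_lt_add_right this 1

lemma rel_lt_iff {S : Finset ℕ} {x y : ℕ} (hx : x ∈ Finset.Icc 1 S.card)
    (hy : y ∈ Finset.Icc 1 S.card) : rel S x < rel S y ↔ x < y := by
  constructor
  · intro h
    by_contra hc
    push_neg at hc
    rcases hc.lt_or_eq with h' | h'
    · exact absurd (rel_lt hy hx h') (lt_asymm h)
    · exact absurd h (by rw [h']; exact lt_irrefl _)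
  · exact rel_lt hx hy

lemma unrel_lt_iff {S : Finset ℕ} {y z : ℕ} (hy : y ∈ S) (hz : z ∈ S) :
    unrel S y < unrel S z ↔ y < z := by
  constructor
  · intro h
    by_contra hc
    push_neg at hc
    rcases hc.lt_or_eq with h' | h'
    · exact absurd (unrel_lt hz hy h') (lt_asymm h)
    · exact absurd h (by rw [h']; exact lt_irrefl _)
  · exact unrel_lt hy hz

noncomputable def glue (S Sc : Finset ℕ) (Tu : Fin k × Fin k → ℕ) (Tv : Fin m × Fin m → ℕ)
    (c : Fin (k+m) × Fin (k+m)) : ℕ :=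
  if h1 : (c.1 : ℕ) < k ∧ (c.2 : ℕ) < k then
    rel S (Tu (⟨c.1, h1.1⟩, ⟨c.2, h1.2⟩))
  else if h2 : k ≤ (c.1 : ℕ) ∧ k ≤ (c.2 : ℕ) then
    rel Sc (Tv (⟨(c.1 : ℕ) - k, by have := c.1.isLt; omega⟩,
      ⟨(c.2 : ℕ) - k, by have := c.2.isLt; omega⟩))
  else 0

lemma glue_eL (S Sc : Finset ℕ) (Tu : Fin k × Fin k → ℕ) (Tv : Fin m × Fin m → ℕ)
    (c : Fin k × Fin k) : glue S Sc Tu Tv (eL c) = rel S (Tu c) := by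
  have h1 : (((eL (k:=k) (m:=m) c).1 : ℕ) < k) ∧ (((eL (k:=k) (m:=m) c).2 : ℕ) < k) :=
    ⟨c.1.isLt, c.2.isLt⟩
  rw [glue, dif_pos h1]
  rfl

lemma glue_eR (S Sc : Finset ℕ) (Tu : Fin k × Fin k → ℕ) (Tv : Fin m × Fin m → ℕ)
    (c : Fin m × Fin m) : glue S Sc Tu Tv (eR c) = rel Sc (Tv c) := by
  have h1 : ¬((((eR (k:=k) (m:=m) c).1 : ℕ) < k) ∧ (((eR (k:=k) (m:=m) c).2 : ℕ) < k)) := by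
    simp only [eR, Function.Embedding.coeFn_mk, Fin.coe_natAdd, not_and]
    omega
  have h2 : (k ≤ ((eR (k:=k) (m:=m) c).1 : ℕ)) ∧ (k ≤ ((eR (k:=k) (m:=m) c).2 : ℕ)) := by
    simp only [eR, Function.Embedding.coeFn_mk, Fin.coe_natAdd]
    omega
  rw [glue, dif_neg h1, dif_pos h2]
  congr 1
  congr 1
  apply Prod.ext <;> · apply Fin.ext; simp [eR]

lemma glue_LR (S Sc : Finset ℕ) (Tu : Fin k × Fin k → ℕ) (Tv : Fin m × Fin m → ℕ)
    (i : Fin k) (j : Fin m) : glue S Sc Tu Tv (Fin.castAdd m i, Fin.natAdd k j) = 0 := by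
  have hi : ((Fin.castAdd m i : Fin (k+m)) : ℕ) < k := i.isLt
  have hj : k ≤ ((Fin.natAdd k j : Fin (k+m)) : ℕ) := by simp
  rw [glue, dif_neg (by simp only [not_and]; omega), dif_neg (by simp only [not_and]; omega)]

lemma glue_RL (S Sc : Finset ℕ) (Tu : Fin k × Fin k → ℕ) (Tv : Fin m × Fin m → ℕ)
    (i : Fin m) (j : Fin k) : glue S Sc Tu Tv (Fin.natAdd k i, Fin.castAdd m j) = 0 := by
  have hi : k ≤ ((Fin.natAdd k i : Fin (k+m)) : ℕ) := by simp
  have hj : ((Fin.castAdd m j : Fin (k+m)) : ℕ) < k := j.isLt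
  rw [glue, dif_neg (by simp only [not_and]; omega), dif_neg (by simp only [not_and]; omega)]

lemma hook_subset {n : ℕ} (w : Equiv.Perm (Fin n)) (c : Fin n × Fin n) :
    hook w c ⊆ rothe w := filter_subset _ _

lemma brt_val_mem {n : ℕ} {w : Equiv.Perm (Fin n)} {T : Fin n × Fin n → ℕ}
    (h : IsBRT w T) {c : Fin n × Fin n} (hc : c ∈ rothe w) :
    T c ∈ Finset.Icc 1 (plen w) := by
  have := h.1.1 (Finset.mem_coe.mpr hc)
  rw [Set.mem_Icc] at this
  exact Finset.mem_Icc.mpr this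

lemma glue_isBRT {S : Finset ℕ} {Tu : Fin k × Fin k → ℕ} {Tv : Fin m × Fin m → ℕ}
    (hS : S ⊆ Finset.Icc 1 (plen u + plen v)) (hScard : S.card = plen u)
    (hu : IsBRT u Tu) (hv : IsBRT v Tv) :
    IsBRT (dsum u v) (glue S (Finset.Icc 1 (plen u + plen v) \ S) Tu Tv) := by
  set N := plen u + plen v with hN
  set Sc := Finset.Icc 1 N \ S with hSc
  set T := glue S Sc Tu Tv with hT
  have hplen : plen (dsum u v) = N := plen_dsum u v
  have hIccN : (Finset.Icc 1 N).card = N := by rw [Nat.card_Icc]; omega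
  have hSccard : Sc.card = plen v := by
    rw [hSc, card_sdiff_of_subset hS, hIccN, hScard]; omega
  have h0S : (0 : ℕ) ∉ S := fun h => by simpa using Finset.mem_Icc.mp (hS h)
  have h0Sc : (0 : ℕ) ∉ Sc := fun h => by
    simpa using Finset.mem_Icc.mp (mem_sdiff.mp h).1
  have hmemL : ∀ {a : Fin k × Fin k}, a ∈ rothe u → Tu a ∈ Finset.Icc 1 S.card := by
    intro a ha; rw [hScard]; exact brt_val_mem hu ha
  have hmemR : ∀ {b : Fin m × Fin m}, b ∈ rothe v → Tv b ∈ Finset.Icc 1 Sc.card := by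
    intro b hb; rw [hSccard]; exact brt_val_mem hv hb
  have hvalL : ∀ {a : Fin k × Fin k}, a ∈ rothe u → T (eL a) ∈ S := by
    intro a ha; rw [hT, glue_eL]; exact rel_mem (hmemL ha)
  have hvalR : ∀ {b : Fin m × Fin m}, b ∈ rothe v → T (eR b) ∈ Sc := by
    intro b hb; rw [hT, glue_eR]; exact rel_mem (hmemR hb)
  refine ⟨⟨?_, ?_, ?_⟩, ?_, ?_⟩
  · -- MapsTo
    intro c hc
    rw [Finset.mem_coe, rothe_dsum, mem_union] at hc
    rw [Set.mem_Icc, hplen]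
    rcases hc with h | h
    · obtain ⟨a, ha, rfl⟩ := mem_map.mp h
      exact Finset.mem_Icc.mp (hS (hvalL ha))
    · obtain ⟨b, hb, rfl⟩ := mem_map.mp h
      exact Finset.mem_Icc.mp (mem_sdiff.mp (hvalR hb)).1
  · -- InjOn
    intro c hc c' hc' heq
    rw [Finset.mem_coe, rothe_dsum, mem_union] at hc hc'
    rcases hc with h | h <;> rcases hc' with h' | h'
    · obtain ⟨a, ha, rfl⟩ := mem_map.mp h
      obtain ⟨a', ha', rfl⟩ := mem_map.mp h'
      rw [hT, glue_eL, glue_eL] at heq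
      have := congrArg (unrel S) heq
      rw [unrel_rel (hmemL ha), unrel_rel (hmemL ha')] at this
      rw [hu.1.2.1 (Finset.mem_coe.mpr ha) (Finset.mem_coe.mpr ha') this]
    · obtain ⟨a, ha, rfl⟩ := mem_map.mp h
      obtain ⟨b, hb, rfl⟩ := mem_map.mp h'
      exact absurd (heq ▸ hvalL ha) (fun hx => (mem_sdiff.mp (hvalR hb)).2 (heq ▸ hx))
    · obtain ⟨b, hb, rfl⟩ := mem_map.mp h
      obtain ⟨a, ha, rfl⟩ := mem_map.mp h'
      exact absurd (heq ▸ hvalR hb) (fun hx => (mem_sdiff.mp hx).2 (hvalL ha))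
    · obtain ⟨b, hb, rfl⟩ := mem_map.mp h
      obtain ⟨b', hb', rfl⟩ := mem_map.mp h'
      rw [hT, glue_eR, glue_eR] at heq
      have := congrArg (unrel Sc) heq
      rw [unrel_rel (hmemR hb), unrel_rel (hmemR hb')] at this
      rw [hv.1.2.1 (Finset.mem_coe.mpr hb) (Finset.mem_coe.mpr hb') this]
  · -- SurjOn
    intro y hy
    rw [Set.mem_Icc, hplen] at hy
    by_cases hyS : y ∈ S
    · have hx : unrel S y ∈ Finset.Icc 1 S.card := unrel_mem hyS
      rw [hScard] at hx
      have hx' : unrel S y ∈ Set.Icc 1 (plen u) := by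
        rw [Set.mem_Icc]; exact Finset.mem_Icc.mp hx
      obtain ⟨a, ha, hTa⟩ := hu.1.2.2 hx'
      refine ⟨eL a, ?_, ?_⟩
      · rw [Finset.mem_coe, rothe_dsum]
        exact mem_union_left _ (mem_map_of_mem _ (Finset.mem_coe.mp ha))
      · rw [hT, glue_eL, hTa, rel_unrel hyS]
    · have hySc : y ∈ Sc := mem_sdiff.mpr ⟨Finset.mem_Icc.mpr hy, hyS⟩
      have hx : unrel Sc y ∈ Finset.Icc 1 Sc.card := unrel_mem hySc
      rw [hSccard] at hx
      have hx' : unrel Sc y ∈ Set.Icc 1 (plen v) := by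
        rw [Set.mem_Icc]; exact Finset.mem_Icc.mp hx
      obtain ⟨b, hb, hTb⟩ := hv.1.2.2 hx'
      refine ⟨eR b, ?_, ?_⟩
      · rw [Finset.mem_coe, rothe_dsum]
        exact mem_union_right _ (mem_map_of_mem _ (Finset.mem_coe.mp hb))
      · rw [hT, glue_eR, hTb, rel_unrel hySc]
  · -- vanishing
    rintro ⟨x, y⟩ hc
    revert hc
    refine Fin.addCases (fun i => ?_) (fun i => ?_) x <;>
      refine Fin.addCases (fun j => ?_) (fun j => ?_) y <;> intro hc
    · rw [show ((Fin.castAdd m i, Fin.castAdd m j) : Fin (k+m) × Fin (k+m)) = eL (i, j)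
        from rfl] at hc ⊢
      rw [mem_rothe_L] at hc
      rw [hT, glue_eL, hu.2.1 _ hc, rel_zero]
    · exact glue_LR S Sc Tu Tv i j
    · exact glue_RL S Sc Tu Tv i j
    · rw [show ((Fin.natAdd k i, Fin.natAdd k j) : Fin (k+m) × Fin (k+m)) = eR (i, j)
        from rfl] at hc ⊢
      rw [mem_rothe_R] at hc
      rw [hT, glue_eR, hv.2.1 _ hc, rel_zero]
  · -- balanced
    intro c hc
    rw [rothe_dsum, mem_union] at hc
    rcases hc with h | h
    · obtain ⟨a, ha, rfl⟩ := mem_map.mp h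
      rw [hook_dsum_L, filter_map, card_map, row_count_L, ← hu.2.2 a ha]
      congr 1
      apply filter_congr
      intro d hd
      have hd' : d ∈ rothe u := hook_subset u a hd
      simp only [Function.comp_apply, hT, glue_eL]
      exact rel_lt_iff (hmemL hd') (hmemL ha)
    · obtain ⟨b, hb, rfl⟩ := mem_map.mp h
      rw [hook_dsum_R, filter_map, card_map, row_count_R, ← hv.2.2 b hb]
      congr 1
      apply filter_congr
      intro d hd
      have hd' : d ∈ rothe v := hook_subset v b hd
      simp only [Function.comp_apply, hT, glue_eR]
      exact rel_lt_iff (hmemR hd') (hmemR hb)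

variable (T : Fin (k+m) × Fin (k+m) → ℕ)

noncomputable def SuT : Finset ℕ := (rothe u).image fun a => T (eL a)
noncomputable def SvT : Finset ℕ := (rothe v).image fun b => T (eR b)
noncomputable def TuT : Fin k × Fin k → ℕ := fun a => unrel (SuT u T) (T (eL a))
noncomputable def TvT : Fin m × Fin m → ℕ := fun b => unrel (SvT v T) (T (eR b))

variable {T}

lemma hSu_sub (hT : IsBRT (dsum u v) T) :
    SuT u T ⊆ Finset.Icc 1 (plen u + plen v) := by
  intro y hy
  obtain ⟨a, ha, rfl⟩ := mem_image.mp hy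
  rw [← plen_dsum u v]
  exact brt_val_mem hT ((mem_rothe_L u v a).mpr ha)

lemma hSv_sub (hT : IsBRT (dsum u v) T) :
    SvT v T ⊆ Finset.Icc 1 (plen u + plen v) := by
  intro y hy
  obtain ⟨b, hb, rfl⟩ := mem_image.mp hy
  rw [← plen_dsum u v]
  exact brt_val_mem hT ((mem_rothe_R u v b).mpr hb)

lemma hSu_card (hT : IsBRT (dsum u v) T) : (SuT u T).card = plen u := by
  rw [SuT, Finset.card_image_of_injOn, card_rothe]
  intro a ha a' ha' heq
  have := hT.1.2.1 (Finset.mem_coe.mpr ((mem_rothe_L u v a).mpr ha))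
    (Finset.mem_coe.mpr ((mem_rothe_L u v a').mpr ha')) heq
  exact eL.injective this

lemma hSv_card (hT : IsBRT (dsum u v) T) : (SvT v T).card = plen v := by
  rw [SvT, Finset.card_image_of_injOn, card_rothe]
  intro b hb b' hb' heq
  have := hT.1.2.1 (Finset.mem_coe.mpr ((mem_rothe_R u v b).mpr hb))
    (Finset.mem_coe.mpr ((mem_rothe_R u v b').mpr hb')) heq
  exact eR.injective this

lemma isBRT_TuT (hT : IsBRT (dsum u v) T) : IsBRT u (TuT u T) := by
  have hmem : ∀ {a : Fin k × Fin k}, a ∈ rothe u → T (eL a) ∈ SuT u T := by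
    intro a ha; exact mem_image_of_mem _ ha
  refine ⟨⟨?_, ?_, ?_⟩, ?_, ?_⟩
  · intro a ha
    rw [Finset.mem_coe] at ha
    have := unrel_mem (hmem ha)
    rw [hSu_card u v hT] at this
    rw [Set.mem_Icc]
    exact Finset.mem_Icc.mp this
  · intro a ha a' ha' heq
    rw [Finset.mem_coe] at ha ha'
    simp only [TuT] at heq
    have := congrArg (rel (SuT u T)) heq
    rw [rel_unrel (hmem ha), rel_unrel (hmem ha')] at this
    have := hT.1.2.1 (Finset.mem_coe.mpr ((mem_rothe_L u v a).mpr ha))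
      (Finset.mem_coe.mpr ((mem_rothe_L u v a').mpr ha')) this
    exact eL.injective this
  · intro x hx
    have hx' : x ∈ Finset.Icc 1 (SuT u T).card := by
      rw [hSu_card u v hT]; rw [Set.mem_Icc] at hx; exact Finset.mem_Icc.mpr hx
    have hy : rel (SuT u T) x ∈ SuT u T := rel_mem hx'
    obtain ⟨a, ha, hTa⟩ := mem_image.mp hy
    exact ⟨a, Finset.mem_coe.mpr ha, by simp only [TuT]; rw [hTa, unrel_rel hx']⟩
  · intro a ha
    simp only [TuT]
    rw [hT.2.1 _ fun hc => ha ((mem_rothe_L u v a).mp hc)]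
    apply unrel_zero
    intro h0
    obtain ⟨a', ha', hTa'⟩ := mem_image.mp h0
    have := brt_val_mem hT ((mem_rothe_L u v a').mpr ha')
    rw [hTa'] at this
    simpa using Finset.mem_Icc.mp this
  · intro a ha
    have := hT.2.2 (eL a) ((mem_rothe_L u v a).mpr ha)
    rw [hook_dsum_L, filter_map, card_map, row_count_L] at this
    rw [← this]
    congr 1
    apply filter_congr
    intro d hd
    have hd' : d ∈ rothe u := hook_subset u a hd
    simp only [Function.comp_apply, TuT]
    exact unrel_lt_iff (hmem hd') (hmem ha)

lemma isBRT_TvT (hT : IsBRT (dsum u v) T) : IsBRT v (TvT v T) := by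
  have hmem : ∀ {b : Fin m × Fin m}, b ∈ rothe v → T (eR b) ∈ SvT v T := by
    intro b hb; exact mem_image_of_mem _ hb
  refine ⟨⟨?_, ?_, ?_⟩, ?_, ?_⟩
  · intro b hb
    rw [Finset.mem_coe] at hb
    have := unrel_mem (hmem hb)
    rw [hSv_card u v hT] at this
    rw [Set.mem_Icc]
    exact Finset.mem_Icc.mp this
  · intro b hb b' hb' heq
    rw [Finset.mem_coe] at hb hb'
    simp only [TvT] at heq
    have := congrArg (rel (SvT v T)) heq
    rw [rel_unrel (hmem hb), rel_unrel (hmem hb')] at this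
    have := hT.1.2.1 (Finset.mem_coe.mpr ((mem_rothe_R u v b).mpr hb))
      (Finset.mem_coe.mpr ((mem_rothe_R u v b').mpr hb')) this
    exact eR.injective this
  · intro x hx
    have hx' : x ∈ Finset.Icc 1 (SvT v T).card := by
      rw [hSv_card u v hT]; rw [Set.mem_Icc] at hx; exact Finset.mem_Icc.mpr hx
    have hy : rel (SvT v T) x ∈ SvT v T := rel_mem hx'
    obtain ⟨b, hb, hTb⟩ := mem_image.mp hy
    exact ⟨b, Finset.mem_coe.mpr hb, by simp only [TvT]; rw [hTb, unrel_rel hx']⟩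
  · intro b hb
    simp only [TvT]
    rw [hT.2.1 _ fun hc => hb ((mem_rothe_R u v b).mp hc)]
    apply unrel_zero
    intro h0
    obtain ⟨b', hb', hTb'⟩ := mem_image.mp h0
    have := brt_val_mem hT ((mem_rothe_R u v b').mpr hb')
    rw [hTb'] at this
    simpa using Finset.mem_Icc.mp this
  · intro b hb
    have := hT.2.2 (eR b) ((mem_rothe_R u v b).mpr hb)
    rw [hook_dsum_R, filter_map, card_map, row_count_R] at this
    rw [← this]
    congr 1
    apply filter_congr
    intro d hd
    have hd' : d ∈ rothe v := hook_subset v b hd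
    simp only [Function.comp_apply, TvT]
    exact unrel_lt_iff (hmem hd') (hmem hb)

lemma SvT_eq (hT : IsBRT (dsum u v) T) :
    SvT v T = Finset.Icc 1 (plen u + plen v) \ SuT u T := by
  ext y
  rw [mem_sdiff]
  constructor
  · intro hy
    refine ⟨hSv_sub u v hT hy, ?_⟩
    obtain ⟨b, hb, rfl⟩ := mem_image.mp hy
    intro hyS
    obtain ⟨a, ha, hTa⟩ := mem_image.mp hyS
    have := hT.1.2.1 (Finset.mem_coe.mpr ((mem_rothe_L u v a).mpr ha))
      (Finset.mem_coe.mpr ((mem_rothe_R u v b).mpr hb)) hTa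
    have := congrArg (fun p => (Fin.val p.1)) this
    simp only [eL, eR, Function.Embedding.coeFn_mk, Fin.coe_castAdd, Fin.coe_natAdd] at this
    have := a.1.isLt
    omega
  · rintro ⟨hy1, hy2⟩
    have : y ∈ Set.Icc 1 (plen (dsum u v)) := by
      rw [Set.mem_Icc, plen_dsum]; exact Finset.mem_Icc.mp hy1
    obtain ⟨c, hc, rfl⟩ := hT.1.2.2 this
    rw [Finset.mem_coe, rothe_dsum, mem_union] at hc
    rcases hc with h | h
    · obtain ⟨a, ha, rfl⟩ := mem_map.mp h
      exact absurd (mem_image_of_mem _ ha) hy2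
    · obtain ⟨b, hb, rfl⟩ := mem_map.mp h
      exact mem_image_of_mem _ hb

lemma glue_split (hT : IsBRT (dsum u v) T) :
    glue (SuT u T) (Finset.Icc 1 (plen u + plen v) \ SuT u T)
      (TuT u T) (TvT v T) = T := by
  have h0Su : (0 : ℕ) ∉ SuT u T := by
    intro h0
    obtain ⟨a, ha, hTa⟩ := mem_image.mp h0
    have := brt_val_mem hT ((mem_rothe_L u v a).mpr ha)
    rw [hTa] at this
    simpa using Finset.mem_Icc.mp this
  have h0Sv : (0 : ℕ) ∉ SvT v T := by
    intro h0
    obtain ⟨b, hb, hTb⟩ := mem_image.mp h0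
    have := brt_val_mem hT ((mem_rothe_R u v b).mpr hb)
    rw [hTb] at this
    simpa using Finset.mem_Icc.mp this
  rw [← SvT_eq u v hT]
  funext c
  obtain ⟨x, y⟩ := c
  refine Fin.addCases (fun i => ?_) (fun i => ?_) x <;>
    refine Fin.addCases (fun j => ?_) (fun j => ?_) y
  · rw [show ((Fin.castAdd m i, Fin.castAdd m j) : Fin (k+m) × Fin (k+m)) = eL (i, j)
      from rfl, glue_eL]
    by_cases hij : (i, j) ∈ rothe u
    · simp only [TuT]
      rw [rel_unrel (show T (eL (i, j)) ∈ SuT u T from mem_image_of_mem _ hij)]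
    · simp only [TuT]
      rw [hT.2.1 _ (fun hc => hij ((mem_rothe_L u v (i, j)).mp hc)), unrel_zero h0Su, rel_zero]
  · rw [glue_LR, hT.2.1 _ (mem_rothe_LR u v i j)]
  · rw [glue_RL, hT.2.1 _ (mem_rothe_RL u v i j)]
  · rw [show ((Fin.natAdd k i, Fin.natAdd k j) : Fin (k+m) × Fin (k+m)) = eR (i, j)
      from rfl, glue_eR]
    by_cases hij : (i, j) ∈ rothe v
    · simp only [TvT]
      rw [rel_unrel (show T (eR (i, j)) ∈ SvT v T from mem_image_of_mem _ hij)]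
    · simp only [TvT]
      rw [hT.2.1 _ (fun hc => hij ((mem_rothe_R u v (i, j)).mp hc)), unrel_zero h0Sv, rel_zero]

variable {S : Finset ℕ} {Tu : Fin k × Fin k → ℕ} {Tv : Fin m × Fin m → ℕ}

lemma Sc_card (hS : S ⊆ Finset.Icc 1 (plen u + plen v)) (hScard : S.card = plen u) :
    (Finset.Icc 1 (plen u + plen v) \ S).card = plen v := by
  rw [card_sdiff_of_subset hS, Nat.card_Icc, hScard]; omega

lemma SuT_glue (hS : S ⊆ Finset.Icc 1 (plen u + plen v)) (hScard : S.card = plen u)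
    (hu : IsBRT u Tu) :
    SuT u (glue S (Finset.Icc 1 (plen u + plen v) \ S) Tu Tv) = S := by
  ext y
  rw [SuT, mem_image]
  constructor
  · rintro ⟨a, ha, rfl⟩
    rw [glue_eL]
    apply rel_mem
    rw [hScard]
    exact brt_val_mem hu ha
  · intro hy
    have hx : unrel S y ∈ Finset.Icc 1 S.card := unrel_mem hy
    have hx' : unrel S y ∈ Set.Icc 1 (plen u) := by
      rw [← hScard, Set.mem_Icc]; exact Finset.mem_Icc.mp hx
    obtain ⟨a, ha, hTa⟩ := hu.1.2.2 hx'
    exact ⟨a, Finset.mem_coe.mp ha, by rw [glue_eL, hTa, rel_unrel hy]⟩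

lemma SvT_glue (hS : S ⊆ Finset.Icc 1 (plen u + plen v)) (hScard : S.card = plen u)
    (hv : IsBRT v Tv) :
    SvT v (glue S (Finset.Icc 1 (plen u + plen v) \ S) Tu Tv)
      = Finset.Icc 1 (plen u + plen v) \ S := by
  ext y
  rw [SvT, mem_image]
  constructor
  · rintro ⟨b, hb, rfl⟩
    rw [glue_eR]
    apply rel_mem
    rw [Sc_card u v hS hScard]
    exact brt_val_mem hv hb
  · intro hy
    have hx : unrel (Finset.Icc 1 (plen u + plen v) \ S) y
        ∈ Finset.Icc 1 (Finset.Icc 1 (plen u + plen v) \ S).card := unrel_mem hy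
    have hx' : unrel (Finset.Icc 1 (plen u + plen v) \ S) y ∈ Set.Icc 1 (plen v) := by
      rw [Set.mem_Icc]
      have h2 := Finset.mem_Icc.mp hx
      rw [Sc_card u v hS hScard] at h2
      exact h2
    obtain ⟨b, hb, hTb⟩ := hv.1.2.2 hx'
    exact ⟨b, Finset.mem_coe.mp hb, by rw [glue_eR, hTb, rel_unrel hy]⟩

lemma TuT_glue (hS : S ⊆ Finset.Icc 1 (plen u + plen v)) (hScard : S.card = plen u)
    (hu : IsBRT u Tu) :
    TuT u (glue S (Finset.Icc 1 (plen u + plen v) \ S) Tu Tv) = Tu := by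
  have h0S : (0 : ℕ) ∉ S := fun h => by simpa using Finset.mem_Icc.mp (hS h)
  funext a
  simp only [TuT]
  rw [SuT_glue u v hS hScard hu, glue_eL]
  by_cases ha : a ∈ rothe u
  · exact unrel_rel (by rw [hScard]; exact brt_val_mem hu ha)
  · rw [hu.2.1 _ ha, rel_zero, unrel_zero h0S]

lemma TvT_glue (hS : S ⊆ Finset.Icc 1 (plen u + plen v)) (hScard : S.card = plen u)
    (hu : IsBRT u Tu) (hv : IsBRT v Tv) :
    TvT v (glue S (Finset.Icc 1 (plen u + plen v) \ S) Tu Tv) = Tv := by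
  have h0Sc : (0 : ℕ) ∉ Finset.Icc 1 (plen u + plen v) \ S := fun h => by
    simpa using Finset.mem_Icc.mp (mem_sdiff.mp h).1
  funext b
  simp only [TvT]
  rw [SvT_glue u v hS hScard hv, glue_eR]
  by_cases hb : b ∈ rothe v
  · exact unrel_rel (by rw [Sc_card u v hS hScard]; exact brt_val_mem hv hb)
  · rw [hv.2.1 _ hb, rel_zero, unrel_zero h0Sc]

noncomputable def brtEquiv :
    {T : Fin (k+m) × Fin (k+m) → ℕ // IsBRT (dsum u v) T} ≃
      ({S : Finset ℕ // S ⊆ Finset.Icc 1 (plen u + plen v) ∧ S.card = plen u} ×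
        {Tu : Fin k × Fin k → ℕ // IsBRT u Tu} ×
        {Tv : Fin m × Fin m → ℕ // IsBRT v Tv}) where
  toFun := fun ⟨T, hT⟩ => (⟨SuT u T, hSu_sub u v hT, hSu_card u v hT⟩,
    ⟨TuT u T, isBRT_TuT u v hT⟩, ⟨TvT v T, isBRT_TvT u v hT⟩)
  invFun := fun x =>
    ⟨glue x.1.1 (Finset.Icc 1 (plen u + plen v) \ x.1.1) x.2.1.1 x.2.2.1,
      glue_isBRT u v x.1.2.1 x.1.2.2 x.2.1.2 x.2.2.2⟩
  left_inv := fun ⟨T, hT⟩ => Subtype.ext (glue_split u v hT)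
  right_inv := fun ⟨⟨S, hS1, hS2⟩, ⟨Tu, hu⟩, ⟨Tv, hv⟩⟩ => by
    refine Prod.ext ?_ (Prod.ext ?_ ?_) <;> apply Subtype.ext
    · exact SuT_glue u v hS1 hS2 hu
    · exact TuT_glue u v hS1 hS2 hu
    · exact TvT_glue u v hS1 hS2 hu hv

lemma card_choose :
    Nat.card {S : Finset ℕ // S ⊆ Finset.Icc 1 (plen u + plen v) ∧ S.card = plen u}
      = (plen u + plen v).choose (plen u) := by
  rw [Nat.card_congr (Equiv.subtypeEquivRight
    (fun S => (mem_powersetCard (n := plen u) (t := Finset.Icc 1 (plen u + plen v))).symm))]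
  rw [Nat.card_eq_finsetCard, card_powersetCard, Nat.card_Icc]
  simp

end BRTaux

/-- `|BRT(u ⊕ v)| = C(ℓ(u)+ℓ(v), ℓ(u)) · |BRT(u)| · |BRT(v)|`. -/

theorem brtCard_dsum {k m : ℕ} (u : Equiv.Perm (Fin k)) (v : Equiv.Perm (Fin m)) :
    brtCard (dsum u v)
      = Nat.choose (plen u + plen v) (plen u) * brtCard u * brtCard v := by
  rw [brtCard, Nat.card_congr (BRTaux.brtEquiv u v), Nat.card_prod, Nat.card_prod,
    BRTaux.card_choose u v, mul_assoc]
  rfl
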